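/- Flat version of the paper's Proposition (reverse direction): Let E be a complex normed vector space, and let V₀ : EuclideanSpace ℝ (Fin n) → E be differentiable with V₀ x ≠ 0 for all x. Suppose there is a closed ℂ-valued 1-form ω on ℝⁿ such that (fderiv ℝ V₀ x) u = (ω x u) • (V₀ x) for all x and u. Then there exists a parallel rescaling of V₀: a function f : EuclideanSpace ℝ (Fin n) → ℂ with f x ≠ 0 for all x such that the map V := fun x => f x • V₀ x satisfies HasFDerivAt V (0 : EuclideanSpace ℝ (Fin n) →L[ℝ] E) x for every x (i.e. V is parallel/constant). -/

import Mathlib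

open MeasureTheory Metric intervalIntegral

set_option maxHeartbeats 1000000 in
lemma primitive_exists {n : ℕ}
    (ω : EuclideanSpace ℝ (Fin n) → (EuclideanSpace ℝ (Fin n) →L[ℝ] ℂ))
    (hω : ContDiff ℝ 1 ω)
    (hsym : ∀ (x u v : EuclideanSpace ℝ (Fin n)),
      (fderiv ℝ ω x u) v = (fderiv ℝ ω x v) u)
    (x₀ : EuclideanSpace ℝ (Fin n)) :
    HasFDerivAt (fun y => ∫ t in (0:ℝ)..1, ω (t • y) y) (ω x₀) x₀ := by
  have hωc : Continuous ω := hω.continuous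
  have hω' : Continuous (fderiv ℝ ω) := hω.continuous_fderiv one_ne_zero
  set F' : EuclideanSpace ℝ (Fin n) → ℝ → (EuclideanSpace ℝ (Fin n) →L[ℝ] ℂ) := fun x t => ω (t • x) + t • ((fderiv ℝ ω (t • x)) x) with hF'
  -- continuity of t ↦ F' x t for any fixed x
  have hcont : ∀ x : EuclideanSpace ℝ (Fin n), Continuous fun t : ℝ => F' x t := by
    intro x
    apply Continuous.add
    · exact hωc.comp (continuous_id.smul continuous_const)
    · exact continuous_id.smul
        (((hω'.comp (continuous_id.smul continuous_const))).clm_apply continuous_const)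
  -- the pointwise derivative statement
  have hdiff : ∀ (t : ℝ) (x : EuclideanSpace ℝ (Fin n)), HasFDerivAt (fun y => ω (t • y) y) (F' x t) x := by
    intro t x
    have h1 : HasFDerivAt (fun y : EuclideanSpace ℝ (Fin n) => ω (t • y))
        ((fderiv ℝ ω (t • x)).comp (t • ContinuousLinearMap.id ℝ (EuclideanSpace ℝ (Fin n)))) x :=
      ((hω.differentiable one_ne_zero (t • x)).hasFDerivAt).comp x ((hasFDerivAt_id x).const_smul t)
    have := h1.clm_apply (hasFDerivAt_id x)
    refine (this.congr_fderiv ?_); symm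
    ext v
    simp only [hF', ContinuousLinearMap.add_apply, ContinuousLinearMap.coe_comp',
      Function.comp_apply, ContinuousLinearMap.coe_id', id_eq, ContinuousLinearMap.flip_apply,
      ContinuousLinearMap.smul_apply, ContinuousLinearMap.coe_smul', Pi.smul_apply]
    rw [hsym (t • x) x v, (fderiv ℝ ω (t • x)).map_smul, ContinuousLinearMap.smul_apply]
  -- FTC computation of the integral of F' x₀
  have hFTC : (∫ t in (0:ℝ)..1, F' x₀ t) = ω x₀ := by
    have hderiv : ∀ t ∈ Set.uIcc (0:ℝ) 1,
        HasDerivAt (fun s : ℝ => s • ω (s • x₀)) (F' x₀ t) t := by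
      intro t _
      have hline : HasDerivAt (fun s : ℝ => s • x₀) x₀ t := by
        simpa using (hasDerivAt_id t).smul_const x₀
      have h1 : HasDerivAt (fun s : ℝ => ω (s • x₀)) ((fderiv ℝ ω (t • x₀)) x₀) t :=
        ((hω.differentiable one_ne_zero (t • x₀)).hasFDerivAt).comp_hasDerivAt t hline
      have := (hasDerivAt_id t).smul h1
      refine (this.congr_deriv ?_); symm
      simp [hF']
      abel
    have := intervalIntegral.integral_eq_sub_of_hasDerivAt hderiv
      ((hcont x₀).intervalIntegrable 0 1)
    rw [this, one_smul, one_smul]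
    ext v
    simp
  rw [← hFTC]
  -- bound setup
  set R : ℝ := ‖x₀‖ + 1 with hR
  obtain ⟨C₁, hC₁⟩ := (isCompact_closedBall (0:EuclideanSpace ℝ (Fin n)) R).exists_bound_of_continuousOn hωc.continuousOn
  obtain ⟨C₂, hC₂⟩ := (isCompact_closedBall (0:EuclideanSpace ℝ (Fin n)) R).exists_bound_of_continuousOn (f := fderiv ℝ ω) (by exact hω'.continuousOn)
  have hmem : ∀ t ∈ Set.uIoc (0:ℝ) 1, ∀ x ∈ ball x₀ 1, t • x ∈ closedBall (0:EuclideanSpace ℝ (Fin n)) R ∧ ‖x‖ ≤ R := by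
    intro t ht x hx
    rw [Set.uIoc_of_le (by norm_num : (0:ℝ) ≤ 1)] at ht
    have hxn : ‖x‖ ≤ R := by
      have h2 := mem_ball_iff_norm.mp hx
      have h3 : ‖x‖ ≤ ‖x₀‖ + ‖x - x₀‖ := norm_le_insert' x x₀
      rw [hR]; linarith
    refine ⟨?_, hxn⟩
    rw [mem_closedBall_zero_iff, norm_smul]
    have ht1 : ‖t‖ ≤ 1 := by
      rw [Real.norm_eq_abs, abs_le]; constructor <;> [linarith [ht.1.le]; linarith [ht.2]]
    calc ‖t‖ * ‖x‖ ≤ 1 * R := by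
          apply mul_le_mul ht1 hxn (norm_nonneg _) zero_le_one
      _ = R := one_mul R
  apply intervalIntegral.hasFDerivAt_integral_of_dominated_of_fderiv_le
    (F := fun x t => ω (t • x) x) (F' := F') (bound := fun _ => C₁ + C₂ * R)
    (s := ball x₀ 1) (ball_mem_nhds x₀ one_pos)
  · exact Filter.Eventually.of_forall fun x =>
      ((hωc.comp (continuous_id.smul continuous_const)).clm_apply continuous_const).aestronglyMeasurable
  · exact (((hωc.comp (continuous_id.smul continuous_const)).clm_apply
      continuous_const)).intervalIntegrable 0 1
  · exact (hcont x₀).aestronglyMeasurable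
  · refine Filter.Eventually.of_forall fun t ht x hx => ?_
    obtain ⟨hK, hxR⟩ := hmem t ht x hx
    have h1 : ‖ω (t • x)‖ ≤ C₁ := hC₁ _ hK
    have h2 : ‖fderiv ℝ ω (t • x)‖ ≤ C₂ := hC₂ _ hK
    have ht1 : ‖t‖ ≤ 1 := by
      rw [Set.uIoc_of_le (by norm_num : (0:ℝ) ≤ 1)] at ht
      rw [Real.norm_eq_abs, abs_le]; constructor <;> [linarith [ht.1.le]; linarith [ht.2]]
    calc ‖F' x t‖ ≤ ‖ω (t • x)‖ + ‖t • ((fderiv ℝ ω (t • x)) x)‖ := norm_add_le _ _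
      _ ≤ C₁ + C₂ * R := by
          apply add_le_add h1
          refine le_trans (ContinuousLinearMap.opNorm_smul_le t _) ?_
          calc ‖t‖ * ‖(fderiv ℝ ω (t • x)) x‖ ≤ 1 * (C₂ * R) := by
                apply mul_le_mul ht1 ?_ (norm_nonneg _) zero_le_one
                calc ‖(fderiv ℝ ω (t • x)) x‖ ≤ ‖fderiv ℝ ω (t • x)‖ * ‖x‖ :=
                      (fderiv ℝ ω (t • x)).le_opNorm x
                  _ ≤ C₂ * R := by
                      apply mul_le_mul h2 hxR (norm_nonneg _)
                      exact le_trans (norm_nonneg (fderiv ℝ ω (t • x))) h2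
            _ = C₂ * R := one_mul _
  · exact intervalIntegrable_const
  · exact Filter.Eventually.of_forall fun t _ x _ => hdiff t x

/-- Flat version (reverse direction): if `V₀` is nonvanishing, differentiable, and satisfies
`∇V₀ = ω V₀` for a closed ℂ-valued 1-form `ω`, then `V₀` can be rescaled by a nonvanishing
complex function `f` so that `V = f • V₀` is parallel (has vanishing Fréchet derivative). -/
theorem exists_parallel_rescaling {E : Type*} [NormedAddCommGroup E] [NormedSpace ℝ E]
    [NormedSpace ℂ E] [IsScalarTower ℝ ℂ E] {n : ℕ}
    (V₀ : EuclideanSpace ℝ (Fin n) → E)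
    (hV₀ : Differentiable ℝ V₀) (hne : ∀ x, V₀ x ≠ 0)
    (ω : EuclideanSpace ℝ (Fin n) → (EuclideanSpace ℝ (Fin n) →L[ℝ] ℂ))
    (hω : ContDiff ℝ 1 ω)
    (hsym : ∀ (x u v : EuclideanSpace ℝ (Fin n)),
      (fderiv ℝ ω x u) v = (fderiv ℝ ω x v) u)
    (hrel : ∀ (x u : EuclideanSpace ℝ (Fin n)),
      (fderiv ℝ V₀ x) u = (ω x u) • (V₀ x)) :
    ∃ f : EuclideanSpace ℝ (Fin n) → ℂ,
      (∀ x, f x ≠ 0) ∧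
      ∀ x : EuclideanSpace ℝ (Fin n),
        HasFDerivAt (fun y => f y • V₀ y) (0 : EuclideanSpace ℝ (Fin n) →L[ℝ] E) x := by
  set g : EuclideanSpace ℝ (Fin n) → ℂ := fun y => ∫ t in (0:ℝ)..1, ω (t • y) y with hg
  have hgd : ∀ x, HasFDerivAt g (ω x) x := primitive_exists ω hω hsym
  refine ⟨fun y => Complex.exp (-(g y)), fun x => Complex.exp_ne_zero _, fun x => ?_⟩
  have hfd : HasFDerivAt (fun y => Complex.exp (-(g y)))
      (Complex.exp (-(g x)) • (-(ω x))) x := ((hgd x).neg).cexp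
  have hmain := hfd.smul (hV₀ x).hasFDerivAt
  have h0 : (Complex.exp (-(g x)) • fderiv ℝ V₀ x
      + (Complex.exp (-(g x)) • (-(ω x))).smulRight (V₀ x))
      = (0 : EuclideanSpace ℝ (Fin n) →L[ℝ] E) := by
    ext u
    simp only [ContinuousLinearMap.add_apply, ContinuousLinearMap.smul_apply,
      ContinuousLinearMap.smulRight_apply, ContinuousLinearMap.neg_apply,
      ContinuousLinearMap.zero_apply, hrel x u, smul_smul, smul_neg, neg_smul]
    rw [smul_eq_mul]
    exact add_neg_cancel _
  exact hmain.congr_fderiv h0
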